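/- Let A be an n×n complex matrix with rows R_1, …, R_n, and for each 1 ≤ i ≤ n let R_{−i} := span{R_j : j ≠ i} be the vector space spanned by the other rows, and dist(R_i, R_{−i}) the Euclidean distance from R_i to R_{−i}. Then n^{-1/2} min_{1≤i≤n} dist(R_i, R_{−i}) ≤ s_n(A) ≤ min_{1≤i≤n} dist(R_i, R_{−i}). -/

import Mathlib

open MeasureTheory Filter Matrix Topology

noncomputable section

/-- Unsorted singular values of `A`: the square roots of the eigenvalues of `A * Aᴴ`. -/
noncomputable def singVals {n : ℕ} (A : Matrix (Fin n) (Fin n) ℂ) : Fin n → ℝ :=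
  fun i => Real.sqrt ((Matrix.isHermitian_mul_conjTranspose_self A).eigenvalues i)

/-- The singular values of `A` sorted in nonincreasing order. -/
noncomputable def sdesc {n : ℕ} (A : Matrix (Fin n) (Fin n) ℂ) : Fin n → ℝ :=
  fun i => (singVals A ∘ Tuple.sort (singVals A)) i.rev

/-- `sv A k` is the `(k+1)`-th largest singular value `s_{k+1}(A)` of `A`
(0-based indexing: `sv A 0 = s₁(A)`, …, `sv A (n-1) = sₙ(A)`), junk value `0` out of range. -/
noncomputable def sv {n : ℕ} (A : Matrix (Fin n) (Fin n) ℂ) (k : ℕ) : ℝ :=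
  if h : k < n then sdesc A ⟨k, h⟩ else 0

/-- The `i`-th row of `A`, as a vector of the Euclidean space `ℂⁿ`. -/
def rowE {n : ℕ} (A : Matrix (Fin n) (Fin n) ℂ) (i : Fin n) : EuclideanSpace ℂ (Fin n) :=
  (EuclideanSpace.equiv (Fin n) ℂ).symm (A i)

/-- The Euclidean distance from the row `Rᵢ` of `A` to the span of the other rows. -/
def distRow {n : ℕ} (A : Matrix (Fin n) (Fin n) ℂ) (i : Fin n) : ℝ :=
  Metric.infDist (rowE A i)
    (Submodule.span ℂ (rowE A '' {j : Fin n | j ≠ i}) : Set (EuclideanSpace ℂ (Fin n)))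

local notation "⟪" x ", " y "⟫" => @inner ℂ _ _ x y

variable {n : ℕ} (A : Matrix (Fin n) (Fin n) ℂ)

lemma coord_le_norm (x : EuclideanSpace ℂ (Fin n)) (i : Fin n) : ‖x i‖ ≤ ‖x‖ := by
  rw [EuclideanSpace.norm_eq]
  have h1 : ‖x i‖ ^ 2 ≤ ∑ j, ‖x j‖ ^ 2 :=
    Finset.single_le_sum (f := fun j => ‖x j‖ ^ 2) (fun j _ => sq_nonneg _) (Finset.mem_univ i)
  calc ‖x i‖ = Real.sqrt (‖x i‖ ^ 2) := (Real.sqrt_sq (norm_nonneg _)).symm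
    _ ≤ _ := Real.sqrt_le_sqrt h1

lemma norm_sq_eq_sum (x : EuclideanSpace ℂ (Fin n)) : ‖x‖ ^ 2 = ∑ j, ‖x j‖ ^ 2 := by
  rw [EuclideanSpace.norm_eq, Real.sq_sqrt (Finset.sum_nonneg fun j _ => sq_nonneg _)]

lemma sum_smul_rowE (c : Fin n → ℂ) :
    (∑ j, c j • rowE A j : EuclideanSpace ℂ (Fin n))
      = (EuclideanSpace.equiv (Fin n) ℂ).symm (c ᵥ* A) := by
  have : (c ᵥ* A) = ∑ j, c j • A j := by
    funext k
    simp [vecMul, dotProduct, Finset.sum_apply]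
  rw [this, map_sum]
  simp [rowE]

lemma key_inner (x : EuclideanSpace ℂ (Fin n)) :
    ⟪(∑ j, (starRingEnd ℂ) (x j) • rowE A j : EuclideanSpace ℂ (Fin n)),
      ∑ j, (starRingEnd ℂ) (x j) • rowE A j⟫
      = ⟪x, Matrix.toEuclideanLin (A * Aᴴ) x⟫ := by
  rw [sum_smul_rowE]
  set u : Fin n → ℂ := (fun j => (starRingEnd ℂ) (x j)) ᵥ* A with hu
  have hstar : (fun j => (starRingEnd ℂ) (x j)) = star ((WithLp.equiv 2 (Fin n → ℂ)) x) := rfl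
  have hL : ⟪x, Matrix.toEuclideanLin (A * Aᴴ) x⟫
      = star ((WithLp.equiv 2 (Fin n → ℂ)) x) ⬝ᵥ ((A * Aᴴ) *ᵥ ((WithLp.equiv 2 (Fin n → ℂ)) x)) := by
    rw [PiLp.inner_apply]
    simp [dotProduct, toEuclideanLin_apply, mul_comm]
  rw [hL, ← mulVec_mulVec, dotProduct_mulVec, mulVec_conjTranspose, hstar] at *
  rw [PiLp.inner_apply]
  simp only [dotProduct, Pi.star_apply]
  exact Finset.sum_congr rfl fun t _ => by
    simp [hu]
    rw [Complex.mul_conj']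
    rfl

lemma eigL (j : Fin n) :
    Matrix.toEuclideanLin (A * Aᴴ)
        ((Matrix.isHermitian_mul_conjTranspose_self A).eigenvectorBasis j)
      = ((Matrix.isHermitian_mul_conjTranspose_self A).eigenvalues j : ℝ)
          • (Matrix.isHermitian_mul_conjTranspose_self A).eigenvectorBasis j := by
  have h := (Matrix.isHermitian_mul_conjTranspose_self A).mulVec_eigenvectorBasis j
  rw [toEuclideanLin_apply]
  rw [h]
  rfl

lemma inner_L_eq (x : EuclideanSpace ℂ (Fin n)) :
    RCLike.re ⟪x, Matrix.toEuclideanLin (A * Aᴴ) x⟫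
      = ∑ j, (Matrix.isHermitian_mul_conjTranspose_self A).eigenvalues j
          * ‖(Matrix.isHermitian_mul_conjTranspose_self A).eigenvectorBasis.repr x j‖ ^ 2 := by
  set hB := Matrix.isHermitian_mul_conjTranspose_self A
  set b := hB.eigenvectorBasis
  set L := Matrix.toEuclideanLin (A * Aᴴ)
  have hsym : L.IsSymmetric := Matrix.isHermitian_iff_isSymmetric.1 hB
  have hx : (∑ j, b.repr x j • b j : EuclideanSpace ℂ (Fin n)) = x := b.sum_repr x
  have hbj : ∀ j, ⟪b j, L x⟫ = (hB.eigenvalues j : ℂ) * b.repr x j := by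
    intro j
    rw [← hsym (b j) x, eigL]
    rw [RCLike.real_smul_eq_coe_smul (K := ℂ), inner_smul_left]
    rw [b.repr_apply_apply]
    simp
    left; rfl
  have hexp : ⟪x, L x⟫ = ∑ j, (starRingEnd ℂ) (b.repr x j) * ⟪b j, L x⟫ := by
    calc ⟪x, L x⟫ = ⟪(∑ j, b.repr x j • b j : EuclideanSpace ℂ (Fin n)), L x⟫ := by rw [hx]
    _ = _ := by rw [sum_inner]; exact Finset.sum_congr rfl fun j _ => by rw [inner_smul_left]
  rw [hexp, map_sum]
  refine Finset.sum_congr rfl fun j _ => ?_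
  rw [hbj]
  have : (starRingEnd ℂ) (b.repr x j) * ((hB.eigenvalues j : ℂ) * b.repr x j)
      = (hB.eigenvalues j : ℂ) * ((‖b.repr x j‖ : ℂ) ^ 2) := by
    rw [show ((‖b.repr x j‖ : ℂ) ^ 2) = (starRingEnd ℂ) (b.repr x j) * b.repr x j by
      rw [RCLike.conj_mul]; norm_cast]
    ring
  rw [this]
  norm_cast

lemma distRow_nonneg (i : Fin n) : 0 ≤ distRow A i := Metric.infDist_nonneg

lemma span_dist_le (c : Fin n → ℂ) (i : Fin n) :
    ‖c i‖ * distRow A i ≤ ‖(∑ j, c j • rowE A j : EuclideanSpace ℂ (Fin n))‖ := by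
  set S := Submodule.span ℂ (rowE A '' {j : Fin n | j ≠ i})
  set v : EuclideanSpace ℂ (Fin n) := ∑ j ∈ Finset.univ.erase i, c j • rowE A j with hv
  have hvS : v ∈ S := by
    refine Submodule.sum_mem _ fun j hj => Submodule.smul_mem _ _ ?_
    exact Submodule.subset_span ⟨j, (Finset.mem_erase.1 hj).1, rfl⟩
  have hsplit : (∑ j, c j • rowE A j : EuclideanSpace ℂ (Fin n)) = c i • rowE A i + v :=
    (Finset.add_sum_erase _ _ (Finset.mem_univ i)).symm
  rcases eq_or_ne (c i) 0 with hci | hci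
  · simp [hci]
  · set z : EuclideanSpace ℂ (Fin n) := -(c i)⁻¹ • v with hz
    have hzS : z ∈ S := Submodule.smul_mem _ _ hvS
    have hfac : (∑ j, c j • rowE A j : EuclideanSpace ℂ (Fin n))
        = c i • (rowE A i - z) := by
      rw [hsplit, smul_sub, hz, smul_smul, mul_neg, mul_inv_cancel₀ hci, neg_smul, one_smul,
        sub_neg_eq_add]
    rw [hfac, norm_smul]
    refine mul_le_mul_of_nonneg_left ?_ (norm_nonneg _)
    have := Metric.infDist_le_dist_of_mem (x := rowE A i) hzS
    rwa [dist_eq_norm] at this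

lemma sv_eq_min (h : 0 < n) : ∃ i₀ : Fin n,
    sv A (n - 1) = singVals A i₀ ∧ ∀ i, singVals A i₀ ≤ singVals A i := by
  have hn1 : n - 1 < n := Nat.sub_lt h one_pos
  have h1 : sv A (n - 1) = sdesc A ⟨n - 1, hn1⟩ := dif_pos hn1
  have h2 : (⟨n - 1, hn1⟩ : Fin n).rev = ⟨0, h⟩ := by
    ext; simp [Fin.val_rev]; omega
  refine ⟨Tuple.sort (singVals A) ⟨0, h⟩, ?_, ?_⟩
  · rw [h1]; unfold sdesc; rw [h2]; rfl
  · intro i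
    have := Tuple.monotone_sort (singVals A)
      (a := ⟨0, h⟩) (b := (Tuple.sort (singVals A)).symm i) (by simp [Fin.le_def])
    simpa using this
/-- Rudelson–Vershynin row bound:
`n^{-1/2} min_i dist(Rᵢ, R₋ᵢ) ≤ sₙ(A) ≤ min_i dist(Rᵢ, R₋ᵢ)`. -/
theorem rudelson_vershynin_row_bound {n : ℕ} (A : Matrix (Fin n) (Fin n) ℂ) :
    (Real.sqrt n)⁻¹ * (⨅ i : Fin n, distRow A i) ≤ sv A (n - 1) ∧
    sv A (n - 1) ≤ ⨅ i : Fin n, distRow A i := by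
  rcases Nat.eq_zero_or_pos n with h0 | h
  · subst h0
    constructor <;> simp [sv]
  · obtain ⟨i₀, hsv, hmin⟩ := sv_eq_min A h
    haveI : Nonempty (Fin n) := ⟨⟨0, h⟩⟩
    classical
    set μ := (Matrix.isHermitian_mul_conjTranspose_self A).eigenvalues with hμdef
    set b := (Matrix.isHermitian_mul_conjTranspose_self A).eigenvectorBasis with hbdef
    have hμ0 : ∀ i, 0 ≤ μ i := fun i =>
      Matrix.eigenvalues_self_mul_conjTranspose_nonneg A i
    have hμmin : ∀ i, μ i₀ ≤ μ i := by
      intro i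
      have h1 : Real.sqrt (μ i₀) ≤ Real.sqrt (μ i) := hmin i
      calc μ i₀ = Real.sqrt (μ i₀) ^ 2 := (Real.sq_sqrt (hμ0 i₀)).symm
        _ ≤ Real.sqrt (μ i) ^ 2 := pow_le_pow_left₀ (Real.sqrt_nonneg _) h1 2
        _ = μ i := Real.sq_sqrt (hμ0 i)
    have hbdd : BddBelow (Set.range fun i => distRow A i) :=
      ⟨0, by rintro _ ⟨i, rfl⟩; exact distRow_nonneg A i⟩
    have hinf0 : 0 ≤ ⨅ i, distRow A i := le_ciInf fun i => distRow_nonneg A i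
    have hksq : ∀ x : EuclideanSpace ℂ (Fin n),
        ‖(∑ j, (starRingEnd ℂ) (x j) • rowE A j : EuclideanSpace ℂ (Fin n))‖ ^ 2
          = ∑ j, μ j * ‖b.repr x j‖ ^ 2 := by
      intro x
      rw [← inner_L_eq, ← key_inner, inner_self_eq_norm_sq]
    have hray : ∀ x : EuclideanSpace ℂ (Fin n), μ i₀ * ‖x‖ ^ 2
        ≤ ‖(∑ j, (starRingEnd ℂ) (x j) • rowE A j : EuclideanSpace ℂ (Fin n))‖ ^ 2 := by
      intro x
      rw [hksq]
      have hnx : ‖x‖ ^ 2 = ∑ j, ‖b.repr x j‖ ^ 2 := by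
        rw [← b.repr.norm_map x, norm_sq_eq_sum]
      rw [hnx, Finset.mul_sum]
      exact Finset.sum_le_sum fun j _ =>
        mul_le_mul_of_nonneg_right (hμmin j) (sq_nonneg _)
    constructor
    · -- lower bound
      set x := b i₀ with hxdef
      have hwsq : ‖(∑ j, (starRingEnd ℂ) (x j) • rowE A j : EuclideanSpace ℂ (Fin n))‖ ^ 2
          = μ i₀ := by
        rw [hksq, hxdef, b.repr_self]
        rw [Finset.sum_eq_single i₀]
        · simp [EuclideanSpace.single_apply]
        · intro j _ hj
          simp [EuclideanSpace.single_apply, hj]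
        · simp
      obtain ⟨i, -, hmax⟩ := Finset.exists_max_image Finset.univ (fun j => ‖x j‖)
        ⟨⟨0, h⟩, Finset.mem_univ _⟩
      have hx1 : ‖x‖ = 1 := b.orthonormal.1 i₀
      have hcoordsq : 1 ≤ (n : ℝ) * ‖x i‖ ^ 2 := by
        have h1 : (1 : ℝ) = ∑ j, ‖x j‖ ^ 2 := by
          rw [← norm_sq_eq_sum, hx1]; norm_num
        rw [h1]
        calc ∑ j, ‖x j‖ ^ 2 ≤ ∑ _j : Fin n, ‖x i‖ ^ 2 :=
              Finset.sum_le_sum fun j _ =>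
                pow_le_pow_left₀ (norm_nonneg _) (hmax j (Finset.mem_univ _)) 2
          _ = (n : ℝ) * ‖x i‖ ^ 2 := by
              simp [Finset.sum_const, Finset.card_univ, nsmul_eq_mul]
      have hcoord : (Real.sqrt n)⁻¹ ≤ ‖x i‖ := by
        have h2 : 1 ≤ Real.sqrt ((n : ℝ) * ‖x i‖ ^ 2) := by
          rw [show (1 : ℝ) = Real.sqrt 1 from Real.sqrt_one.symm]
          exact Real.sqrt_le_sqrt hcoordsq
        rw [Real.sqrt_mul (by positivity), Real.sqrt_sq (norm_nonneg _)] at h2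
        have hs : 0 < Real.sqrt n := Real.sqrt_pos.2 (by exact_mod_cast h)
        calc (Real.sqrt n)⁻¹ = (Real.sqrt n)⁻¹ * 1 := (mul_one _).symm
          _ ≤ (Real.sqrt n)⁻¹ * (Real.sqrt n * ‖x i‖) :=
              mul_le_mul_of_nonneg_left h2 (by positivity)
          _ = ‖x i‖ := by field_simp
      have hw : ‖(∑ j, (starRingEnd ℂ) (x j) • rowE A j : EuclideanSpace ℂ (Fin n))‖
          = Real.sqrt (μ i₀) := by
        rw [← Real.sqrt_sq (norm_nonneg _), hwsq]
      calc (Real.sqrt n)⁻¹ * (⨅ i, distRow A i) ≤ ‖x i‖ * distRow A i :=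
            mul_le_mul hcoord (ciInf_le hbdd i) hinf0 (norm_nonneg _)
        _ ≤ ‖(∑ j, (starRingEnd ℂ) (x j) • rowE A j : EuclideanSpace ℂ (Fin n))‖ := by
            have h3 := span_dist_le A (fun j => (starRingEnd ℂ) (x j)) i
            simpa [RCLike.norm_conj] using h3
        _ = Real.sqrt (μ i₀) := hw
        _ = sv A (n - 1) := by rw [hsv]; rfl
    · -- upper bound
      refine le_ciInf fun i => ?_
      set S := Submodule.span ℂ (rowE A '' {j : Fin n | j ≠ i}) with hSdef
      have hclosed : IsClosed (S : Set (EuclideanSpace ℂ (Fin n))) :=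
        Submodule.closed_of_finiteDimensional S
      obtain ⟨y, hyS, hyd⟩ := hclosed.exists_infDist_eq_dist ⟨0, S.zero_mem⟩ (rowE A i)
      have hyS' : y ∈ Submodule.span ℂ
          (Set.range fun j : {j : Fin n // j ≠ i} => rowE A (j : Fin n)) := by
        rwa [hSdef, Set.image_eq_range] at hyS
      obtain ⟨c, hc⟩ := (Submodule.mem_span_range_iff_exists_fun ℂ).1 hyS'
      set d : Fin n → ℂ := fun j => if hj : j = i then 1 else -(c ⟨j, hj⟩) with hddef
      have hsum : (∑ j, d j • rowE A j : EuclideanSpace ℂ (Fin n)) = rowE A i - y := by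
        rw [← Finset.add_sum_erase _ _ (Finset.mem_univ i)]
        have h1 : d i = 1 := dif_pos rfl
        have h2 : (∑ j ∈ Finset.univ.erase i, d j • rowE A j : EuclideanSpace ℂ (Fin n))
            = -y := by
          rw [Finset.sum_subtype (p := fun j => j ≠ i) _ (by simp) (fun j => d j • rowE A j)]
          rw [← hc, ← Finset.sum_neg_distrib]
          refine Finset.sum_congr rfl fun j _ => ?_
          rw [show d (j : Fin n) = -(c j) from dif_neg j.2, neg_smul]
        rw [h1, one_smul, h2, sub_eq_add_neg]
      set xv : EuclideanSpace ℂ (Fin n) :=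
        (WithLp.equiv 2 (Fin n → ℂ)).symm (fun j => (starRingEnd ℂ) (d j)) with hxvdef
      have hconj : ∀ j, (starRingEnd ℂ) (xv j) = d j := fun j => Complex.conj_conj _
      have hxnorm : 1 ≤ ‖xv‖ := by
        have h4 := coord_le_norm xv i
        have h5 : ‖xv i‖ = 1 := by
          show ‖(starRingEnd ℂ) (d i)‖ = 1
          rw [show d i = 1 from dif_pos rfl]
          simp
        rwa [h5] at h4
      have hsum' : (∑ j, (starRingEnd ℂ) (xv j) • rowE A j : EuclideanSpace ℂ (Fin n))
          = rowE A i - y := by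
        rw [← hsum]
        exact Finset.sum_congr rfl fun j _ => by rw [hconj]
      have hkey : Real.sqrt (μ i₀) ≤ ‖rowE A i - y‖ := by
        have h6 : μ i₀ ≤ ‖rowE A i - y‖ ^ 2 := by
          rw [← hsum']
          calc μ i₀ = μ i₀ * 1 := (mul_one _).symm
            _ ≤ μ i₀ * ‖xv‖ ^ 2 := by
                refine mul_le_mul_of_nonneg_left ?_ (hμ0 i₀)
                nlinarith [hxnorm]
            _ ≤ _ := hray xv
        calc Real.sqrt (μ i₀) ≤ Real.sqrt (‖rowE A i - y‖ ^ 2) := Real.sqrt_le_sqrt h6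
          _ = ‖rowE A i - y‖ := Real.sqrt_sq (norm_nonneg _)
      calc sv A (n - 1) = Real.sqrt (μ i₀) := by rw [hsv]; rfl
        _ ≤ ‖rowE A i - y‖ := hkey
        _ = distRow A i := by
            rw [show distRow A i = Metric.infDist (rowE A i) (S : Set _) from rfl, hyd,
              dist_eq_norm]
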